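/- arXiv:1404.6841 — 3 statements merged into one kernel-verified Lean document; each statement's English description precedes it below -/
import Mathlib

section
/- Let Q be an m×m real symmetric matrix with eigendecomposition Q = AΛAᵀ (A orthogonal, eigenvalues λ_1 ≥ ... ≥ λ_m), and fix 0 ≤ d ≤ m. Then the rank-d orthogonal projection matrix P minimizing ‖Q − P‖_F over all rank-d symmetric idempotents is P = BBᵀ, where B consists of the eigenvectors of Q corresponding to the d largest eigenvalues. -/
open Matrix BigOperators

noncomputable def frobNorm {m : ℕ} (A : Matrix (Fin m) (Fin m) ℝ) : ℝ :=
  Real.sqrt (∑ i, ∑ j, (A i j) ^ 2)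



lemma frobSq_eq_trace {m : ℕ} (X : Matrix (Fin m) (Fin m) ℝ) :
    ∑ i, ∑ j, (X i j) ^ 2 = (Xᵀ * X).trace := by
  rw [Matrix.trace, Finset.sum_comm]
  apply Finset.sum_congr rfl
  intro j _
  simp [Matrix.mul_apply, Matrix.diag, sq]

lemma card_lt_filter {m d : ℕ} (hd : d ≤ m) :
    ∑ i : Fin m, (if (i : ℕ) < d then (1 : ℝ) else 0) = (d : ℝ) := by
  rw [Finset.sum_boole]
  congr 1
  have : Finset.univ.filter (fun i : Fin m => (i : ℕ) < d) =
      (Finset.range d).attachFin (fun x hx => lt_of_lt_of_le (Finset.mem_range.mp hx) hd) := by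
    ext i
    simp [Finset.mem_attachFin]
  rw [this, Finset.card_attachFin, Finset.card_range]

lemma sum_mul_le_top {m d : ℕ} (hd : d ≤ m) (lam s : Fin m → ℝ)
    (hmono : ∀ i j : Fin m, i ≤ j → lam j ≤ lam i)
    (hs0 : ∀ i, 0 ≤ s i) (hs1 : ∀ i, s i ≤ 1)
    (hsum : ∑ i, s i = (d : ℝ)) :
    ∑ i, lam i * s i ≤ ∑ i, lam i * (if (i : ℕ) < d then 1 else 0) := by
  rcases Nat.eq_zero_or_pos m with hm | hm
  · subst hm; simp
  set t : ℝ := if h : d < m then lam ⟨d, h⟩ else lam ⟨m - 1, Nat.sub_lt hm one_pos⟩ with ht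
  have hlow : ∀ i : Fin m, (i : ℕ) < d → t ≤ lam i := by
    intro i hi
    rw [ht]
    split
    · exact hmono i _ (by simp [Fin.le_def]; omega)
    · exact hmono i _ (by simp [Fin.le_def]; omega)
  have hhigh : ∀ i : Fin m, d ≤ (i : ℕ) → lam i ≤ t := by
    intro i hi
    rw [ht]
    split
    · next h => exact hmono ⟨d, h⟩ i (by simp [Fin.le_def]; omega)
    · next h => exact absurd i.isLt (by omega)
  have key : ∑ i, (lam i - t) * s i ≤ ∑ i, (lam i - t) * (if (i : ℕ) < d then 1 else 0) := by
    apply Finset.sum_le_sum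
    intro i _
    by_cases hi : (i : ℕ) < d
    · simp only [hi, if_pos, mul_one]
      have h1 : 0 ≤ lam i - t := sub_nonneg.mpr (hlow i hi)
      nlinarith [hs1 i]
    · simp only [hi, if_neg, not_false_iff, mul_zero]
      have h1 : lam i - t ≤ 0 := sub_nonpos.mpr (hhigh i (le_of_not_gt hi))
      exact mul_nonpos_of_nonpos_of_nonneg h1 (hs0 i)
  have e1 : ∑ i, (lam i - t) * s i = ∑ i, lam i * s i - t * (d : ℝ) := by
    simp only [sub_mul, Finset.sum_sub_distrib, ← Finset.mul_sum, hsum]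
  have e2 : ∑ i, (lam i - t) * (if (i : ℕ) < d then (1:ℝ) else 0)
      = ∑ i, lam i * (if (i : ℕ) < d then 1 else 0) - t * (d : ℝ) := by
    simp only [sub_mul, Finset.sum_sub_distrib, ← Finset.mul_sum, card_lt_filter hd]
  rw [e1, e2] at key
  linarith

lemma trace_proj {m d : ℕ} (R : Matrix (Fin m) (Fin m) ℝ)
    (hR2 : R * R = R) (hRt : Rᵀ = R) (hRrank : R.rank = d) :
    R.trace = (d : ℝ) := by
  have hRh : R.IsHermitian := by
    have : Rᴴ = Rᵀ := by ext i j; simp [Matrix.conjTranspose_apply]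
    rw [Matrix.IsHermitian, this, hRt]
  set U : Matrix (Fin m) (Fin m) ℝ := (hRh.eigenvectorUnitary : Matrix (Fin m) (Fin m) ℝ) with hU
  have hsp : star U * R * U = Matrix.diagonal (RCLike.ofReal ∘ hRh.eigenvalues) :=
    by have := hRh.conjStarAlgAut_star_eigenvectorUnitary; simpa [Unitary.coe_star] using this
  have hofreal : Matrix.diagonal (RCLike.ofReal ∘ hRh.eigenvalues) =
      Matrix.diagonal hRh.eigenvalues := by congr 1
  rw [hofreal] at hsp
  have hUU : U * star U = 1 := (Matrix.mem_unitaryGroup_iff).mp hRh.eigenvectorUnitary.2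
  have hUU' : star U * U = 1 := (Matrix.mem_unitaryGroup_iff').mp hRh.eigenvectorUnitary.2
  have hDD : Matrix.diagonal hRh.eigenvalues * Matrix.diagonal hRh.eigenvalues
      = Matrix.diagonal hRh.eigenvalues := by
    rw [← hsp]
    calc (star U * R * U) * (star U * R * U)
        = star U * R * ((U * star U) * (R * U)) := by simp only [mul_assoc]
      _ = star U * (R * R) * U := by rw [hUU, one_mul]; simp only [mul_assoc]
      _ = star U * R * U := by rw [hR2]
  have heig : ∀ i, hRh.eigenvalues i = 0 ∨ hRh.eigenvalues i = 1 := by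
    intro i
    have h := congr_fun (congr_fun hDD i) i
    simp only [Matrix.diagonal_mul_diagonal, Matrix.diagonal_apply_eq] at h
    have h2 : hRh.eigenvalues i * (hRh.eigenvalues i - 1) = 0 := by ring_nf; linarith [h]
    rcases mul_eq_zero.mp h2 with h3 | h3
    · exact Or.inl h3
    · exact Or.inr (by linarith)
  -- trace R = sum of eigenvalues
  have htr : R.trace = ∑ i, hRh.eigenvalues i := by
    have hRspec : R = U * Matrix.diagonal hRh.eigenvalues * star U := by
      rw [← hsp]
      calc R = (U * star U) * R * (U * star U) := by rw [hUU]; simp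
        _ = U * (star U * R * U) * star U := by simp only [mul_assoc]
    have := congrArg Matrix.trace hRspec
    rw [this, Matrix.trace_mul_cycle, hUU', one_mul, Matrix.trace_diagonal]
  -- sum of eigenvalues = number of nonzero eigenvalues = rank = d
  have hcard : R.rank = Fintype.card {i // hRh.eigenvalues i ≠ 0} :=
    hRh.rank_eq_card_non_zero_eigs
  have hsum : ∑ i, hRh.eigenvalues i
      = ((Finset.univ.filter (fun i => hRh.eigenvalues i ≠ 0)).card : ℝ) := by
    rw [← Finset.sum_boole]
    apply Finset.sum_congr rfl
    intro i _
    rcases heig i with h | h <;> simp [h]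
  rw [htr, hsum, ← Fintype.card_subtype, ← hcard, hRrank]

lemma conj_trace_inv {m : ℕ} (A M : Matrix (Fin m) (Fin m) ℝ)
    (hA : Aᵀ * A = 1) :
    ((A * M * Aᵀ)ᵀ * (A * M * Aᵀ)).trace = (Mᵀ * M).trace := by
  have h1 : (A * M * Aᵀ)ᵀ = A * Mᵀ * Aᵀ := by
    simp [Matrix.transpose_mul, mul_assoc]
  rw [h1]
  have h2 : (A * Mᵀ * Aᵀ) * (A * M * Aᵀ) = A * (Mᵀ * M) * Aᵀ := by
    calc (A * Mᵀ * Aᵀ) * (A * M * Aᵀ) = A * Mᵀ * ((Aᵀ * A) * (M * Aᵀ)) := by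
          simp only [mul_assoc]
      _ = A * (Mᵀ * M) * Aᵀ := by rw [hA, one_mul]; simp only [mul_assoc]
  rw [h2, Matrix.trace_mul_cycle, ← mul_assoc, hA, one_mul]

lemma B_eq_AE {m d : ℕ} (hd : d ≤ m) (A : Matrix (Fin m) (Fin m) ℝ) :
    A.submatrix id (Fin.castLE hd)
      = A * (1 : Matrix (Fin m) (Fin m) ℝ).submatrix id (Fin.castLE hd) := by
  ext i k
  simp [Matrix.mul_apply, Matrix.submatrix_apply, Matrix.one_apply, eq_comm]

lemma EEt_eq_diag {m d : ℕ} (hd : d ≤ m) :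
    (1 : Matrix (Fin m) (Fin m) ℝ).submatrix id (Fin.castLE hd)
      * ((1 : Matrix (Fin m) (Fin m) ℝ).submatrix id (Fin.castLE hd))ᵀ
    = Matrix.diagonal (fun i : Fin m => if (i : ℕ) < d then (1 : ℝ) else 0) := by
  ext p q
  simp only [Matrix.mul_apply, Matrix.transpose_apply, Matrix.submatrix_apply, id,
    Matrix.one_apply]
  by_cases hpd : (p : ℕ) < d
  · rw [Finset.sum_eq_single ⟨(p : ℕ), hpd⟩]
    · have hc : p = Fin.castLE hd ⟨(p : ℕ), hpd⟩ := by ext; simp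
      rw [if_pos hc]
      by_cases hpq : p = q
      · subst hpq; rw [if_pos hc, Matrix.diagonal_apply_eq, if_pos hpd]; norm_num
      · rw [if_neg (fun h => hpq (hc.trans h.symm)), Matrix.diagonal_apply_ne _ hpq]
        norm_num
    · intro k _ hk
      rw [if_neg, zero_mul]
      intro hcon
      apply hk
      ext
      simpa using congrArg Fin.val hcon.symm
    · simp
  · rw [Finset.sum_eq_zero]
    · simp [Matrix.diagonal_apply, hpd]
    · intro k _
      rw [if_neg, zero_mul]
      intro hcon
      exact hpd (by simpa using (congrArg Fin.val hcon) ▸ k.isLt)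


/-- Let `Q = A Λ Aᵀ` be an eigendecomposition of a real symmetric matrix (`A`
orthogonal, `Λ` diagonal with decreasing diagonal). Then the projection `P = B Bᵀ`
onto the span of the eigenvectors of the `d` largest eigenvalues (the first `d`
columns of `A`) attains the minimum of `‖Q − R‖_F` over all rank-`d` symmetric
idempotent matrices `R`. -/
theorem closest_rank_d_projection {m d : ℕ} (hd : d ≤ m)
    (A Λ : Matrix (Fin m) (Fin m) ℝ)
    (hA : Aᵀ * A = 1) (hA' : A * Aᵀ = 1)
    (hdiag : ∀ i j, i ≠ j → Λ i j = 0)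
    (hsort : ∀ i j : Fin m, i ≤ j → Λ j j ≤ Λ i i)
    (Q : Matrix (Fin m) (Fin m) ℝ) (hQ : Q = A * Λ * Aᵀ)
    (B : Matrix (Fin m) (Fin d) ℝ) (hB : B = A.submatrix id (Fin.castLE hd))
    (R : Matrix (Fin m) (Fin m) ℝ)
    (hR2 : R * R = R) (hRt : Rᵀ = R) (hRrank : R.rank = d) :
    frobNorm (Q - B * Bᵀ) ≤ frobNorm (Q - R) := by
  set f : Fin m → ℝ := fun i => if (i : ℕ) < d then 1 else 0 with hf
  set D : Matrix (Fin m) (Fin m) ℝ := Matrix.diagonal f with hD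
  set S : Matrix (Fin m) (Fin m) ℝ := Aᵀ * R * A with hS
  -- B * Bᵀ = A * D * Aᵀ
  have hBBt : B * Bᵀ = A * D * Aᵀ := by
    rw [hB, B_eq_AE hd A, Matrix.transpose_mul]
    calc (A * (1:Matrix (Fin m) (Fin m) ℝ).submatrix id (Fin.castLE hd)) *
          (((1:Matrix (Fin m) (Fin m) ℝ).submatrix id (Fin.castLE hd))ᵀ * Aᵀ)
        = A * ((1:Matrix (Fin m) (Fin m) ℝ).submatrix id (Fin.castLE hd) *
            ((1:Matrix (Fin m) (Fin m) ℝ).submatrix id (Fin.castLE hd))ᵀ) * Aᵀ := by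
          simp only [Matrix.mul_assoc]
      _ = A * D * Aᵀ := by rw [EEt_eq_diag hd]
  -- conjugated forms
  have hQP : Q - B * Bᵀ = A * (Λ - D) * Aᵀ := by
    rw [hQ, hBBt, ← Matrix.sub_mul, ← Matrix.mul_sub]
  have hRS : A * S * Aᵀ = R := by
    calc A * (Aᵀ * R * A) * Aᵀ = (A * Aᵀ) * R * (A * Aᵀ) := by simp only [mul_assoc]
      _ = R := by rw [hA']; simp
  have hQR : Q - R = A * (Λ - S) * Aᵀ := by
    rw [hQ, ← hRS, ← Matrix.sub_mul, ← Matrix.mul_sub]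
  -- symmetries
  have hΛt : Λᵀ = Λ := by
    ext i j
    by_cases h : i = j
    · subst h; rfl
    · rw [Matrix.transpose_apply, hdiag i j h, hdiag j i (Ne.symm h)]
  have hSt : Sᵀ = S := by
    rw [hS]
    simp only [Matrix.transpose_mul, Matrix.transpose_transpose, hRt, mul_assoc]
  have hDt : Dᵀ = D := Matrix.diagonal_transpose f
  -- idempotence of S and D
  have hS2 : S * S = S := by
    calc (Aᵀ * R * A) * (Aᵀ * R * A) = Aᵀ * R * ((A * Aᵀ) * (R * A)) := by
          simp only [mul_assoc]
      _ = Aᵀ * (R * R) * A := by rw [hA', one_mul]; simp only [mul_assoc]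
      _ = Aᵀ * R * A := by rw [hR2]
  have hf2 : ∀ i, f i * f i = f i := by
    intro i; rw [hf]; dsimp only; split <;> norm_num
  have hD2 : D * D = D := by
    have hff : (fun i => f i * f i) = f := funext hf2
    rw [hD, Matrix.diagonal_mul_diagonal, hff]
  -- traces
  have htrS : S.trace = (d : ℝ) := by
    have h := Matrix.trace_mul_cycle Aᵀ R A
    rw [hS, h, hA', one_mul]
    exact trace_proj R hR2 hRt hRrank
  have htrD : D.trace = (d : ℝ) := by
    rw [hD, Matrix.trace_diagonal]
    exact card_lt_filter hd
  have htrΛS : (Λ * S).trace = ∑ i, Λ i i * S i i := by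
    rw [Matrix.trace]
    apply Finset.sum_congr rfl
    intro i _
    rw [Matrix.diag_apply, Matrix.mul_apply]
    rw [Finset.sum_eq_single i]
    · intro k _ hk; rw [hdiag i k (Ne.symm hk), zero_mul]
    · simp
  have htrΛD : (Λ * D).trace = ∑ i, Λ i i * f i := by
    rw [Matrix.trace]
    apply Finset.sum_congr rfl
    intro i _
    rw [Matrix.diag_apply, hD, Matrix.mul_diagonal]
  -- diagonal entries of S are in [0,1]
  have hSdiag : ∀ i, S i i = ∑ k, (S i k) ^ 2 := by
    intro i
    conv_lhs => rw [← hS2, Matrix.mul_apply]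
    apply Finset.sum_congr rfl
    intro k _
    have : S k i = S i k := congrFun (congrFun hSt i) k
    rw [this, sq]
  have hs0 : ∀ i, 0 ≤ S i i := by
    intro i; rw [hSdiag i]
    exact Finset.sum_nonneg fun k _ => sq_nonneg _
  have hs1 : ∀ i, S i i ≤ 1 := by
    intro i
    have h1 : (S i i) ^ 2 ≤ S i i := by
      conv_rhs => rw [hSdiag i]
      exact Finset.single_le_sum (fun k _ => sq_nonneg (S i k)) (Finset.mem_univ i)
    nlinarith [hs0 i]
  have hsums : ∑ i, S i i = (d : ℝ) := htrS
  -- the key scalar inequality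
  have hkey : ∑ i, Λ i i * S i i ≤ ∑ i, Λ i i * f i :=
    sum_mul_le_top hd (fun i => Λ i i) (fun i => S i i)
      (fun i j hij => hsort i j hij) hs0 hs1 hsums
  -- expand traces of squares
  have expand : ∀ (M : Matrix (Fin m) (Fin m) ℝ), Mᵀ = M → M * M = M →
      ((Λ - M)ᵀ * (Λ - M)).trace = (Λ * Λ).trace - 2 * (Λ * M).trace + M.trace := by
    intro M hMt hM2
    rw [Matrix.transpose_sub, hΛt, hMt, Matrix.sub_mul, Matrix.mul_sub, Matrix.mul_sub, hM2]
    rw [Matrix.trace_sub, Matrix.trace_sub, Matrix.trace_sub, Matrix.trace_mul_comm M Λ]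
    ring
  -- conclude
  rw [frobNorm, frobNorm]
  apply Real.sqrt_le_sqrt
  rw [frobSq_eq_trace, frobSq_eq_trace, hQP, hQR, conj_trace_inv A _ hA, conj_trace_inv A _ hA,
    expand D hDt hD2, expand S hSt hS2, htrS, htrD, htrΛS, htrΛD]
  linarith
end

section
/- For two m-variate Gaussian densities with the same covariance Σ and means φ¹, φ², the L¹ distance is bounded as ∫_{R^m} |N(x; φ¹, Σ) − N(x; φ², Σ)| dx ≤ √(2/π) · ‖φ¹ − φ²‖ / √(λ_min(Σ)), where λ_min(Σ) is the smallest eigenvalue of Σ. -/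
open Matrix MeasureTheory BigOperators

/-- Density of the `m`-variate Gaussian with mean `φ` and covariance `S`. -/
noncomputable def gaussDensity {m : ℕ} (φ : Fin m → ℝ)
    (S : Matrix (Fin m) (Fin m) ℝ) (x : Fin m → ℝ) : ℝ :=
  (2 * Real.pi) ^ (-(m : ℝ) / 2) * S.det ^ (-(1 : ℝ) / 2) *
    Real.exp (-(1 / 2 : ℝ) * ((x - φ) ⬝ᵥ (S⁻¹ *ᵥ (x - φ))))

lemma gaussDensity_continuous {m : ℕ} (φ : Fin m → ℝ) (S : Matrix (Fin m) (Fin m) ℝ) :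
    Continuous (gaussDensity φ S) := by
  unfold gaussDensity
  apply Continuous.mul continuous_const
  apply Real.continuous_exp.comp
  apply Continuous.mul continuous_const
  simp only [dotProduct, Matrix.mulVec, Pi.sub_apply]
  apply continuous_finset_sum
  intro i _
  apply Continuous.mul
  · exact (continuous_apply i).sub continuous_const
  · apply continuous_finset_sum
    intro j _
    exact continuous_const.mul ((continuous_apply j).sub continuous_const)

section OneD
open Real Set

lemma gauss1d_integrable : Integrable (fun t : ℝ => Real.exp (-(1/2) * (t * t))) := by
  have := integrable_exp_neg_mul_sq (by norm_num : (0:ℝ) < 1/2)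
  simpa [pow_two] using this

lemma gauss1d_shift_integrable (c : ℝ) :
    Integrable (fun t : ℝ => Real.exp (-(1/2) * ((t - c) * (t - c)))) :=
  gauss1d_integrable.comp_sub_right c

lemma gauss1d_shift_Iic (a c : ℝ) :
    ∫ t in Iic a, Real.exp (-(1/2) * ((t - c) * (t - c)))
      = ∫ t in Iic (a - c), Real.exp (-(1/2) * (t * t)) := by
  have h := (measurePreserving_add_right (volume : Measure ℝ) c).setIntegral_preimage_emb
    (Homeomorph.addRight c).isClosedEmbedding.measurableEmbedding
    (fun t => Real.exp (-(1/2) * ((t - c) * (t - c)))) (Iic a)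
  rw [preimage_add_const_Iic] at h
  rw [← h]
  simp

lemma oneDimTV (c : ℝ) (hc : 0 ≤ c) :
    ∫ t : ℝ, |Real.exp (-(1/2) * ((t - c) * (t - c))) - Real.exp (-(1/2) * (t * t))|
      ≤ 2 * c := by
  set g : ℝ → ℝ := fun t => Real.exp (-(1/2) * (t * t)) with hg
  set f : ℝ → ℝ := fun t => Real.exp (-(1/2) * ((t - c) * (t - c))) with hf
  have hgi : Integrable g := gauss1d_integrable
  have hfi : Integrable f := gauss1d_shift_integrable c
  have habs : Integrable (fun t => |f t - g t|) := (hfi.sub hgi).abs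
  -- the central piece
  have hmid : (∫ t in Iic (c/2), g t) - ∫ t in Iic (-(c/2)), g t ≤ c := by
    rw [intervalIntegral.integral_Iic_sub_Iic (hgi.integrableOn) (hgi.integrableOn)]
    have h1 : ∫ t in (-(c/2))..(c/2), g t ≤ ∫ t in (-(c/2))..(c/2), (1:ℝ) := by
      apply intervalIntegral.integral_mono_on (by linarith) hgi.intervalIntegrable
        intervalIntegrable_const
      intro t _
      rw [hg]
      refine Real.exp_le_one_iff.2 ?_
      nlinarith [mul_self_nonneg t]
    have h2 : ∫ t in (-(c/2))..(c/2), (1:ℝ) = c := by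
      simp
    linarith
  have hIic : ∫ t in Iic (c/2), |f t - g t| ≤ c := by
    have heq : ∫ t in Iic (c/2), |f t - g t| = (∫ t in Iic (c/2), g t) - ∫ t in Iic (c/2), f t := by
      rw [← integral_sub hgi.integrableOn hfi.integrableOn]
      apply setIntegral_congr_fun measurableSet_Iic
      intro t ht
      simp only [Iic, mem_setOf_eq] at ht
      have h1 : f t ≤ g t := by
        simp only [hf, hg]
        apply Real.exp_le_exp.2
        nlinarith [mul_nonneg hc (by linarith : 0 ≤ c - 2*t)]
      show |f t - g t| = g t - f t
      rw [abs_of_nonpos (by linarith)]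
      ring
    rw [heq, gauss1d_shift_Iic (c/2) c]
    have : c/2 - c = -(c/2) := by ring
    rw [this]
    exact hmid
  have hIoi : ∫ t in Ioi (c/2), |f t - g t| ≤ c := by
    have heq : ∫ t in Ioi (c/2), |f t - g t| = (∫ t in Ioi (c/2), f t) - ∫ t in Ioi (c/2), g t := by
      rw [← integral_sub hfi.integrableOn hgi.integrableOn]
      apply setIntegral_congr_fun measurableSet_Ioi
      intro t ht
      simp only [Ioi, mem_setOf_eq] at ht
      have h1 : g t ≤ f t := by
        simp only [hf, hg]
        apply Real.exp_le_exp.2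
        nlinarith [mul_nonneg hc (by linarith : 0 ≤ 2*t - c)]
      show |f t - g t| = f t - g t
      rw [abs_of_nonneg (by linarith)]
    -- ∫_{Ioi b} h = ∫ h - ∫_{Iic b} h
    have hsplit : ∀ (h : ℝ → ℝ), Integrable h →
        ∀ b : ℝ, ∫ t in Ioi b, h t = (∫ t, h t) - ∫ t in Iic b, h t := by
      intro h hh b
      have := intervalIntegral.integral_Iic_add_Ioi (hh.integrableOn) (hh.integrableOn) (f := h) (b := b)
      linarith
    have hftot : (∫ t, f t) = ∫ t, g t := by
      rw [hf, hg]
      exact integral_sub_right_eq_self (fun t => Real.exp (-(1/2) * (t*t))) c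
    rw [heq, hsplit f hfi, hsplit g hgi, hftot, gauss1d_shift_Iic (c/2) c]
    have : c/2 - c = -(c/2) := by ring
    rw [this]
    linarith [hmid]
  have := intervalIntegral.integral_Iic_add_Ioi (habs.integrableOn) (habs.integrableOn) (f := fun t => |f t - g t|)
    (b := c/2)
  calc ∫ t : ℝ, |f t - g t| = _ := this.symm
    _ ≤ c + c := add_le_add hIic hIoi
    _ = 2 * c := by ring

end OneD


lemma dot_mulVec_left {m : ℕ} (A : Matrix (Fin m) (Fin m) ℝ) (x y : Fin m → ℝ) :
    (A *ᵥ x) ⬝ᵥ y = x ⬝ᵥ (Aᵀ *ᵥ y) := by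
  rw [dotProduct_mulVec, Matrix.vecMul_transpose]

set_option maxHeartbeats 1000000 in
/-- The `L¹` distance between two Gaussians with the same covariance `S` and means
`φ₁, φ₂` is bounded by `√(2/π) ‖φ₁ − φ₂‖ / √(λ_min(S))`. -/
theorem gaussian_mean_shift_L1_bound {m : ℕ}
    (φ₁ φ₂ : Fin m → ℝ) (S : Matrix (Fin m) (Fin m) ℝ) (hS : S.PosDef)
    (lammin : ℝ) (hlam : 0 < lammin)
    (hmin : ∀ i, lammin ≤ hS.1.eigenvalues i)
    (hmin' : ∃ i, lammin = hS.1.eigenvalues i) :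
    ∫ x : Fin m → ℝ, |gaussDensity φ₁ S x - gaussDensity φ₂ S x|
      ≤ Real.sqrt (2 / Real.pi) * Real.sqrt (∑ i, (φ₁ i - φ₂ i) ^ 2) / Real.sqrt lammin := by
  haveI : NeZero m := by
    rcases hmin' with ⟨i, -⟩
    exact ⟨(Fin.pos i).ne'⟩
  classical
  set d := hS.1.eigenvalues with hd
  set δ := φ₁ - φ₂ with hδ
  set U : Matrix (Fin m) (Fin m) ℝ := ↑(hS.1.eigenvectorUnitary) with hUdef
  have hUU : U * star U = 1 := by
    simpa [hUdef] using unitary.coe_mul_star_self hS.1.eigenvectorUnitary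
  have hUU' : star U * U = 1 := by
    simpa [hUdef] using unitary.coe_star_mul_self hS.1.eigenvectorUnitary
  have hdpos : ∀ i, 0 < d i := fun i => hS.eigenvalues_pos i
  have hspec : S = U * Matrix.diagonal d * star U := by
    have := hS.1.spectral_theorem
    simpa [RCLike.ofReal_real_eq_id] using this
  set ν : Fin m → ℝ := star U *ᵥ δ with hν
  set μ : Fin m → ℝ := fun i => (Real.sqrt (d i))⁻¹ * ν i with hμ
  set c := Real.sqrt (μ ⬝ᵥ μ) with hc
  have hc0 : 0 ≤ c := Real.sqrt_nonneg _
  -- orthonormal basis aligned with μ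
  obtain ⟨b, hb⟩ : ∃ b : OrthonormalBasis (Fin m) ℝ (EuclideanSpace ℝ (Fin m)),
      ∀ i, c * b 0 i = μ i := by
    by_cases hcz : c = 0
    · refine ⟨EuclideanSpace.basisFun (Fin m) ℝ, fun i => ?_⟩
      have h0 : μ ⬝ᵥ μ = 0 := by
        have h1 : 0 ≤ μ ⬝ᵥ μ := Finset.sum_nonneg fun i _ => mul_self_nonneg _
        have h2 := hc
        rw [hcz] at h2
        have := (Real.sqrt_eq_zero h1).mp h2.symm
        exact this
      have : ∀ i, μ i = 0 := by
        intro i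
        have := (Finset.sum_eq_zero_iff_of_nonneg
          (fun i _ => mul_self_nonneg (μ i))).mp h0 i (Finset.mem_univ i)
        exact mul_self_eq_zero.mp this
      rw [hcz, this i, zero_mul]
    · have hcpos : 0 < c := lt_of_le_of_ne hc0 (Ne.symm hcz)
      set μ' : EuclideanSpace ℝ (Fin m) := WithLp.toLp 2 μ with hμ'
      have hnorm : ‖μ'‖ = c := by
        rw [EuclideanSpace.norm_eq, hc]
        congr 1
        rw [dotProduct]
        congr 1
        funext i
        simp [hμ', Real.norm_eq_abs, sq_abs, pow_two]
      have horth : Orthonormal ℝ (({0} : Set (Fin m)).restrict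
          (fun _ : Fin m => c⁻¹ • μ')) := by
        constructor
        · rintro ⟨i, hi⟩
          show ‖c⁻¹ • μ'‖ = 1
          rw [norm_smul, hnorm, norm_inv, Real.norm_eq_abs, abs_of_pos hcpos,
            inv_mul_cancel₀ hcz]
        · rintro ⟨i, hi⟩ ⟨j, hj⟩ hij
          exact absurd (Subtype.ext ((Set.eq_of_mem_singleton hi).trans
            (Set.eq_of_mem_singleton hj).symm)) hij
      obtain ⟨b, hb⟩ := horth.exists_orthonormalBasis_extension_of_card_eq
        (by simp) 
      refine ⟨b, fun i => ?_⟩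
      have := hb 0 rfl
      rw [this]
      simp only [PiLp.smul_apply, smul_eq_mul, hμ', PiLp.toLp_apply]
      field_simp
  -- the rotation matrix
  set R : Matrix (Fin m) (Fin m) ℝ :=
    (EuclideanSpace.basisFun (Fin m) ℝ).toBasis.toMatrix b.toBasis with hRdef
  have hRmem : R ∈ Matrix.unitaryGroup (Fin m) ℝ :=
    (EuclideanSpace.basisFun (Fin m) ℝ).toMatrix_orthonormalBasis_mem_unitary b
  have hRapp : ∀ i j, R i j = b j i := fun i j => rfl
  have hRR : R * star R = 1 := (Matrix.mem_unitaryGroup_iff.mp hRmem)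
  have hRR' : star R * R = 1 := (Matrix.mem_unitaryGroup_iff'.mp hRmem)
  set Dh : Matrix (Fin m) (Fin m) ℝ := Matrix.diagonal (fun i => Real.sqrt (d i)) with hDh
  have hDh2 : Dh * Dh = Matrix.diagonal d := by
    rw [hDh, Matrix.diagonal_mul_diagonal]
    exact congrArg Matrix.diagonal (funext fun i => Real.mul_self_sqrt (hdpos i).le)
  have hstarDh : star Dh = Dh := by
    simp [hDh, Matrix.star_eq_conjTranspose, Matrix.diagonal_conjTranspose]
  set M : Matrix (Fin m) (Fin m) ℝ := U * Dh * R with hM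
  have hMM : M * star M = S := by
    rw [hM, Matrix.star_mul, Matrix.star_mul, hstarDh]
    calc U * Dh * R * (star R * (Dh * star U))
        = U * (Dh * ((R * star R) * (Dh * star U))) := by
          simp only [Matrix.mul_assoc]
      _ = U * Matrix.diagonal d * star U := by
          rw [hRR, Matrix.one_mul, ← Matrix.mul_assoc Dh Dh (star U), hDh2,
            Matrix.mul_assoc]
      _ = S := hspec.symm
  have hdetS : 0 < S.det := hS.det_pos
  have hdetstar : (star M).det = M.det := by
    rw [Matrix.star_eq_conjTranspose, Matrix.det_conjTranspose, star_trivial]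
  have hdetMM : S.det = M.det * M.det := by
    rw [← hMM, Matrix.det_mul, hdetstar]
  have hdetM0 : M.det ≠ 0 := by
    intro h
    rw [hdetMM, h, mul_zero] at hdetS
    exact lt_irrefl 0 hdetS
  have habsdet : |M.det| = Real.sqrt S.det := by
    rw [hdetMM, Real.sqrt_mul_self_eq_abs]
  have hMtr : star M = Mᵀ := by
    rw [Matrix.star_eq_conjTranspose, Matrix.conjTranspose_eq_transpose_of_trivial]
  have hMS : Mᵀ * S⁻¹ * M = 1 := by
    have hSinv : S⁻¹ = (star M)⁻¹ * M⁻¹ := by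
      rw [← hMM, Matrix.mul_inv_rev]
    rw [← hMtr, hSinv]
    calc star M * ((star M)⁻¹ * M⁻¹) * M
        = (star M * (star M)⁻¹) * (M⁻¹ * M) := by simp only [Matrix.mul_assoc]
      _ = 1 := by
          rw [Matrix.mul_nonsing_inv _ (by rw [hdetstar]; exact isUnit_iff_ne_zero.2 hdetM0),
            Matrix.nonsing_inv_mul _ (isUnit_iff_ne_zero.2 hdetM0), Matrix.one_mul]
  have hMSv : ∀ z : Fin m → ℝ, Mᵀ *ᵥ (S⁻¹ *ᵥ (M *ᵥ z)) = z := by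
    intro z
    have h := congrArg (fun P : Matrix (Fin m) (Fin m) ℝ => P *ᵥ z) hMS
    simpa [← Matrix.mulVec_mulVec] using h
  have hquad : ∀ z : Fin m → ℝ, (M *ᵥ z) ⬝ᵥ (S⁻¹ *ᵥ (M *ᵥ z)) = z ⬝ᵥ z := by
    intro z
    rw [dot_mulVec_left, hMSv z]
  have hshift : M *ᵥ (Pi.single (0 : Fin m) c) = δ := by
    rw [hM, ← Matrix.mulVec_mulVec, ← Matrix.mulVec_mulVec]
    have h1 : R *ᵥ Pi.single (0 : Fin m) c = μ := by
      funext i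
      rw [Matrix.mulVec_single]
      show R i 0 * c = μ i
      rw [hRapp, ← hb i]
      ring
    rw [h1]
    have h2 : Dh *ᵥ μ = ν := by
      funext i
      rw [hDh, Matrix.mulVec_diagonal, hμ]
      have : Real.sqrt (d i) ≠ 0 := (Real.sqrt_pos.2 (hdpos i)).ne'
      field_simp
    rw [h2, hν, Matrix.mulVec_mulVec, hUU, Matrix.one_mulVec]
  -- dot products of ν and δ
  have hνν : ν ⬝ᵥ ν = δ ⬝ᵥ δ := by
    rw [hν, dot_mulVec_left, Matrix.mulVec_mulVec]
    have : (star U)ᵀ * star U = U * star U := by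
      rw [Matrix.star_eq_conjTranspose, Matrix.conjTranspose_eq_transpose_of_trivial,
        Matrix.transpose_transpose]
    rw [this, hUU, Matrix.one_mulVec]
  have hcB : c ≤ Real.sqrt (∑ i, (φ₁ i - φ₂ i) ^ 2) / Real.sqrt lammin := by
    have hμμ : μ ⬝ᵥ μ ≤ lammin⁻¹ * (∑ i, (φ₁ i - φ₂ i) ^ 2) := by
      have hδδ : δ ⬝ᵥ δ = ∑ i, (φ₁ i - φ₂ i) ^ 2 := by
        rw [dotProduct]
        congr 1
        funext i
        simp [hδ, pow_two]
      have : μ ⬝ᵥ μ ≤ lammin⁻¹ * (ν ⬝ᵥ ν) := by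
        rw [dotProduct, dotProduct, Finset.mul_sum]
        apply Finset.sum_le_sum
        intro i _
        rw [hμ]
        have hs : (Real.sqrt (d i))⁻¹ * (Real.sqrt (d i))⁻¹ = (d i)⁻¹ := by
          rw [← mul_inv, Real.mul_self_sqrt (hdpos i).le]
        have h1 : (Real.sqrt (d i))⁻¹ * ν i * ((Real.sqrt (d i))⁻¹ * ν i)
            = (d i)⁻¹ * (ν i * ν i) := by
          calc (Real.sqrt (d i))⁻¹ * ν i * ((Real.sqrt (d i))⁻¹ * ν i)
              = ((Real.sqrt (d i))⁻¹ * (Real.sqrt (d i))⁻¹) * (ν i * ν i) := by ring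
            _ = (d i)⁻¹ * (ν i * ν i) := by rw [hs]
        rw [h1]
        have h2 : (d i)⁻¹ ≤ lammin⁻¹ := by
          apply inv_anti₀ hlam (hmin i)
        nlinarith [mul_self_nonneg (ν i)]
      calc μ ⬝ᵥ μ ≤ lammin⁻¹ * (ν ⬝ᵥ ν) := this
        _ = lammin⁻¹ * (∑ i, (φ₁ i - φ₂ i) ^ 2) := by rw [hνν, hδδ]
    rw [hc]
    calc Real.sqrt (μ ⬝ᵥ μ) ≤ Real.sqrt (lammin⁻¹ * (∑ i, (φ₁ i - φ₂ i) ^ 2)) :=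
          Real.sqrt_le_sqrt hμμ
      _ = Real.sqrt (∑ i, (φ₁ i - φ₂ i) ^ 2) / Real.sqrt lammin := by
          rw [Real.sqrt_mul (inv_nonneg.2 hlam.le), Real.sqrt_inv, inv_mul_eq_div]
  -- pointwise identity after change of variables
  set K : ℝ := (2 * Real.pi) ^ (-(m : ℝ) / 2) * S.det ^ (-(1 : ℝ) / 2) with hK
  have hKpos : 0 < K := by
    apply mul_pos
    · exact Real.rpow_pos_of_pos (by positivity) _
    · exact Real.rpow_pos_of_pos hdetS _
  set E₁ : (Fin m → ℝ) → ℝ := fun z =>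
    Real.exp (-(1/2 : ℝ) * ((z - Pi.single (0 : Fin m) c) ⬝ᵥ (z - Pi.single (0 : Fin m) c)))
    with hE₁
  set E₂ : (Fin m → ℝ) → ℝ := fun z => Real.exp (-(1/2 : ℝ) * (z ⬝ᵥ z)) with hE₂
  have hpoint : ∀ z : Fin m → ℝ,
      |gaussDensity φ₁ S (M *ᵥ z + φ₂) - gaussDensity φ₂ S (M *ᵥ z + φ₂)|
        = K * |E₁ z - E₂ z| := by
    intro z
    have h2 : M *ᵥ z + φ₂ - φ₂ = M *ᵥ z := add_sub_cancel_right _ _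
    have h1 : M *ᵥ z + φ₂ - φ₁ = M *ᵥ (z - Pi.single (0 : Fin m) c) := by
      rw [Matrix.mulVec_sub, hshift, hδ]
      abel
    have hg2 : gaussDensity φ₂ S (M *ᵥ z + φ₂) = K * E₂ z := by
      unfold gaussDensity
      rw [h2, hquad, ← hK, hE₂]
    have hg1 : gaussDensity φ₁ S (M *ᵥ z + φ₂) = K * E₁ z := by
      unfold gaussDensity
      rw [h1, hquad, ← hK, hE₁]
    rw [hg1, hg2, ← mul_sub, abs_mul, abs_of_pos hKpos]
  -- change of variables
  set F : (Fin m → ℝ) → ℝ :=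
    fun y => |gaussDensity φ₁ S (y + φ₂) - gaussDensity φ₂ S (y + φ₂)| with hF
  have hFcont : Continuous F := by
    apply Continuous.abs
    exact ((gaussDensity_continuous φ₁ S).comp (continuous_id.add continuous_const)).sub
      ((gaussDensity_continuous φ₂ S).comp (continuous_id.add continuous_const))
  have step1 : (∫ x : Fin m → ℝ, |gaussDensity φ₁ S x - gaussDensity φ₂ S x|) = ∫ y, F y :=
    (integral_add_right_eq_self
      (fun x => |gaussDensity φ₁ S x - gaussDensity φ₂ S x|) φ₂).symm
  have step2 : (∫ y, F y) = |M.det| * ∫ z, F (M *ᵥ z) := by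
    have hmap := Real.map_matrix_volume_pi_eq_smul_volume_pi (M := M) hdetM0
    have hvol : (ENNReal.ofReal |M.det|) • Measure.map (Matrix.toLin' M) volume
        = (volume : Measure (Fin m → ℝ)) := by
      rw [hmap, smul_smul, ← ENNReal.ofReal_mul (abs_nonneg _), abs_inv,
        mul_inv_cancel₀ (abs_ne_zero.mpr hdetM0), ENNReal.ofReal_one, one_smul]
    conv_lhs => rw [← hvol]
    rw [integral_smul_measure, ENNReal.toReal_ofReal (abs_nonneg _),
      integral_map (Matrix.toLin' M).continuous_of_finiteDimensional.aemeasurable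
        hFcont.aestronglyMeasurable]
    simp only [Matrix.toLin'_apply, smul_eq_mul]
  have step3 : (∫ z, F (M *ᵥ z)) = K * ∫ z, |E₁ z - E₂ z| := by
    have : (fun z => F (M *ᵥ z)) = fun z => K * |E₁ z - E₂ z| := by
      funext z
      rw [hF]
      exact hpoint z
    rw [this, MeasureTheory.integral_const_mul]
  -- product factorization
  have hsplit : ∀ f : Fin m → ℝ, (∏ i, f i) = f 0 * ∏ i ∈ Finset.univ.erase (0 : Fin m), f i :=
    fun f => (Finset.mul_prod_erase Finset.univ f (Finset.mem_univ 0)).symm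
  set Ffac : Fin m → ℝ → ℝ := fun i t =>
    if i = 0 then |Real.exp (-(1/2 : ℝ) * ((t - c) * (t - c))) - Real.exp (-(1/2 : ℝ) * (t * t))|
    else Real.exp (-(1/2 : ℝ) * (t * t)) with hFfac
  have hprod : ∀ z : Fin m → ℝ, |E₁ z - E₂ z| = ∏ i, Ffac i (z i) := by
    intro z
    set w : Fin m → ℝ := z - Pi.single (0 : Fin m) c with hw
    have hw0 : w 0 = z 0 - c := by simp [hw]
    have hwi : ∀ i : Fin m, i ≠ 0 → w i = z i := by
      intro i hi
      simp [hw, Pi.single_apply, hi]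
    set P : ℝ := ∏ i ∈ Finset.univ.erase (0 : Fin m), Real.exp (-(1/2 : ℝ) * (z i * z i))
      with hP
    have hPpos : 0 < P := Finset.prod_pos fun i _ => Real.exp_pos _
    have hE2s : E₂ z = Real.exp (-(1/2 : ℝ) * (z 0 * z 0)) * P := by
      rw [hE₂]
      show Real.exp (-(1/2 : ℝ) * (z ⬝ᵥ z)) = _
      rw [dotProduct, Finset.mul_sum, Real.exp_sum,
        hsplit (fun i => Real.exp (-(1/2 : ℝ) * (z i * z i)))]
    have hE1s : E₁ z = Real.exp (-(1/2 : ℝ) * ((z 0 - c) * (z 0 - c))) * P := by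
      rw [hE₁]
      show Real.exp (-(1/2 : ℝ) * (w ⬝ᵥ w)) = _
      rw [dotProduct, Finset.mul_sum, Real.exp_sum,
        hsplit (fun i => Real.exp (-(1/2 : ℝ) * (w i * w i))), hw0]
      congr 1
      apply Finset.prod_congr rfl
      intro i hi
      rw [hwi i (Finset.ne_of_mem_erase hi)]
    have hPf : (∏ i ∈ Finset.univ.erase (0 : Fin m), Ffac i (z i)) = P := by
      apply Finset.prod_congr rfl
      intro i hi
      simp [hFfac, Finset.ne_of_mem_erase hi]
    have hF0 : Ffac 0 (z 0) = |Real.exp (-(1/2 : ℝ) * ((z 0 - c) * (z 0 - c)))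
        - Real.exp (-(1/2 : ℝ) * (z 0 * z 0))| := by simp [hFfac]
    rw [hE1s, hE2s, ← sub_mul, abs_mul, abs_of_pos hPpos,
      hsplit (fun i => Ffac i (z i)), hPf, hF0]
  -- evaluate the product of the integrals
  have hgint : (∫ t : ℝ, Real.exp (-(1/2 : ℝ) * (t * t))) = Real.sqrt (2 * Real.pi) := by
    have h := integral_gaussian (1/2 : ℝ)
    rw [show Real.pi / (1/2 : ℝ) = 2 * Real.pi by ring] at h
    simpa [pow_two] using h
  have step5 : (∫ z : Fin m → ℝ, ∏ i, Ffac i (z i))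
      = (∫ t : ℝ, Ffac 0 t) * Real.sqrt (2 * Real.pi) ^ (m - 1) := by
    rw [MeasureTheory.volume_pi, MeasureTheory.integral_fintype_prod_eq_prod Ffac,
      hsplit (fun i => ∫ t : ℝ, Ffac i t)]
    congr 1
    calc (∏ i ∈ Finset.univ.erase (0 : Fin m), ∫ t : ℝ, Ffac i t)
        = ∏ _i ∈ Finset.univ.erase (0 : Fin m), Real.sqrt (2 * Real.pi) := by
          apply Finset.prod_congr rfl
          intro i hi
          have hi0 : i ≠ 0 := Finset.ne_of_mem_erase hi
          rw [hFfac]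
          simp only [hi0, if_false]
          exact hgint
      _ = Real.sqrt (2 * Real.pi) ^ (m - 1) := by
          rw [Finset.prod_const, Finset.card_erase_of_mem (Finset.mem_univ 0),
            Finset.card_univ, Fintype.card_fin]
  -- one-dimensional bound
  have hI0 : (∫ t : ℝ, Ffac 0 t) ≤ 2 * c := by
    have h : (fun t : ℝ => Ffac 0 t) = fun t : ℝ =>
        |Real.exp (-(1/2 : ℝ) * ((t - c) * (t - c))) - Real.exp (-(1/2 : ℝ) * (t * t))| := by
      funext t
      simp [hFfac]
    rw [h]
    exact oneDimTV c hc0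
  -- numeric constants
  have h2πpos : (0:ℝ) < 2 * Real.pi := by positivity
  have hsq2π : Real.sqrt (2 * Real.pi) ^ (m - 1) = (2 * Real.pi) ^ (((m:ℝ) - 1)/2) := by
    rw [Real.sqrt_eq_rpow, ← Real.rpow_natCast ((2*Real.pi) ^ ((1:ℝ)/2)) (m-1),
      ← Real.rpow_mul h2πpos.le]
    congr 1
    rw [Nat.cast_sub (Nat.one_le_iff_ne_zero.2 (NeZero.ne m)), Nat.cast_one]
    ring
  have hdet' : |M.det| = S.det ^ ((1:ℝ)/2) := by
    rw [habsdet, Real.sqrt_eq_rpow]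
  have hAeq : |M.det| * K * Real.sqrt (2 * Real.pi) ^ (m - 1)
      = (2 * Real.pi) ^ (-(1:ℝ)/2) := by
    rw [hdet', hsq2π, hK]
    rw [show S.det ^ ((1:ℝ)/2) * ((2*Real.pi) ^ (-(m:ℝ)/2) * S.det ^ (-(1:ℝ)/2))
        * (2*Real.pi) ^ (((m:ℝ)-1)/2)
        = (S.det ^ ((1:ℝ)/2) * S.det ^ (-(1:ℝ)/2))
          * ((2*Real.pi) ^ (-(m:ℝ)/2) * (2*Real.pi) ^ (((m:ℝ)-1)/2)) from by ring]
    rw [← Real.rpow_add hdetS, ← Real.rpow_add h2πpos,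
      show ((1:ℝ)/2 + -(1:ℝ)/2) = 0 by ring,
      show (-(m:ℝ)/2 + ((m:ℝ)-1)/2) = -(1:ℝ)/2 by ring,
      Real.rpow_zero, one_mul]
  have hconst : (2 * Real.pi) ^ (-(1:ℝ)/2) * 2 = Real.sqrt (2 / Real.pi) := by
    have h2 : Real.sqrt 2 * Real.sqrt 2 = 2 := Real.mul_self_sqrt (by norm_num)
    have hπ : 0 < Real.pi := Real.pi_pos
    have hs2 : (0:ℝ) < Real.sqrt 2 := Real.sqrt_pos.2 (by norm_num)
    have hsπ : (0:ℝ) < Real.sqrt Real.pi := Real.sqrt_pos.2 hπ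
    rw [show (-(1:ℝ)/2) = -((1:ℝ)/2) by ring, Real.rpow_neg h2πpos.le, ← Real.sqrt_eq_rpow,
      Real.sqrt_mul (by norm_num : (0:ℝ) ≤ 2), Real.sqrt_div (by norm_num : (0:ℝ) ≤ 2)]
    field_simp
    nlinarith [h2, hsπ.le]
  have hrpow_pos : (0:ℝ) < (2 * Real.pi) ^ (-(1:ℝ)/2) := Real.rpow_pos_of_pos h2πpos _
  -- assemble
  have chain : (∫ x : Fin m → ℝ, |gaussDensity φ₁ S x - gaussDensity φ₂ S x|)
      ≤ Real.sqrt (2 / Real.pi) * Real.sqrt (∑ i, (φ₁ i - φ₂ i) ^ 2) / Real.sqrt lammin := by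
    calc (∫ x : Fin m → ℝ, |gaussDensity φ₁ S x - gaussDensity φ₂ S x|)
        = ∫ y, F y := step1
      _ = |M.det| * ∫ z, F (M *ᵥ z) := step2
      _ = |M.det| * (K * ∫ z, |E₁ z - E₂ z|) := by rw [step3]
      _ = |M.det| * (K * ∫ z : Fin m → ℝ, ∏ i, Ffac i (z i)) := by
          rw [show (fun z : Fin m → ℝ => |E₁ z - E₂ z|)
            = fun z => ∏ i, Ffac i (z i) from funext hprod]
      _ = |M.det| * (K * ((∫ t : ℝ, Ffac 0 t) * Real.sqrt (2 * Real.pi) ^ (m - 1))) := by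
          rw [step5]
      _ = (|M.det| * K * Real.sqrt (2 * Real.pi) ^ (m - 1)) * (∫ t : ℝ, Ffac 0 t) := by
          ring
      _ = (2 * Real.pi) ^ (-(1:ℝ)/2) * (∫ t : ℝ, Ffac 0 t) := by rw [hAeq]
      _ ≤ (2 * Real.pi) ^ (-(1:ℝ)/2) * (2 * c) :=
          mul_le_mul_of_nonneg_left hI0 hrpow_pos.le
      _ = ((2 * Real.pi) ^ (-(1:ℝ)/2) * 2) * c := by ring
      _ = Real.sqrt (2 / Real.pi) * c := by rw [hconst]
      _ ≤ Real.sqrt (2 / Real.pi)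
            * (Real.sqrt (∑ i, (φ₁ i - φ₂ i) ^ 2) / Real.sqrt lammin) :=
          mul_le_mul_of_nonneg_left hcB (Real.sqrt_nonneg _)
      _ = Real.sqrt (2 / Real.pi) * Real.sqrt (∑ i, (φ₁ i - φ₂ i) ^ 2) / Real.sqrt lammin := by
          rw [mul_div_assoc]
  exact chain
end

section
/- Let Σ₁, Σ₂ be symmetric positive definite m×m matrices with Σ₁⁻¹ − Σ₂⁻¹ positive semidefinite (equivalently Σ₂ − Σ₁ PSD). Then for any mean φ, ∫ |N(x; φ, Σ₁) − N(x; φ, Σ₂)| dx ≤ 2(det(Σ₂)^{1/2} − det(Σ₁)^{1/2}) / det(Σ₁)^{1/2}. -/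
open Matrix MeasureTheory BigOperators

set_option maxHeartbeats 1000000


section Aux

variable {m : ℕ}

private lemma quad_cont (A : Matrix (Fin m) (Fin m) ℝ) :
    Continuous fun x : Fin m → ℝ => x ⬝ᵥ (A *ᵥ x) := by
  simp only [dotProduct, Matrix.mulVec]
  exact continuous_finset_sum _ fun i _ =>
    (continuous_apply i).mul (continuous_finset_sum _ fun j _ =>
      continuous_const.mul (continuous_apply j))

private lemma gauss_aux {A : Matrix (Fin m) (Fin m) ℝ} (hA : A.PosDef) :
    Integrable (fun x : Fin m → ℝ => Real.exp (-(1/2 : ℝ) * (x ⬝ᵥ (A *ᵥ x)))) ∧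
    ∫ x : Fin m → ℝ, Real.exp (-(1/2 : ℝ) * (x ⬝ᵥ (A *ᵥ x)))
      = Real.sqrt (2 * Real.pi) ^ m * (Real.sqrt A.det)⁻¹ := by
  classical
  obtain ⟨R, hRps, hRsq⟩ : ∃ R : Matrix (Fin m) (Fin m) ℝ, R.PosSemidef ∧ R * R = A :=
    open scoped MatrixOrder in
    ⟨CFC.sqrt A, (CFC.sqrt_nonneg A).posSemidef, CFC.sqrt_mul_sqrt_self A hA.posSemidef.nonneg⟩
  have hRsym : Rᵀ = R := by
    have h := hRps.isHermitian
    rwa [Matrix.IsHermitian, Matrix.conjTranspose_eq_transpose_of_trivial] at h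
  have hdetA : 0 < A.det := hA.det_pos
  have hRdet_nonneg : 0 ≤ R.det := by
    rw [hRps.isHermitian.det_eq_prod_eigenvalues]
    exact Finset.prod_nonneg fun i _ => hRps.eigenvalues_nonneg i
  have hRdetsq : R.det * R.det = A.det := by rw [← Matrix.det_mul, hRsq]
  have hRdet_eq : R.det = Real.sqrt A.det := by
    rw [← hRdetsq, Real.sqrt_mul_self hRdet_nonneg]
  have hRdet_pos : 0 < R.det := by
    rw [hRdet_eq]; exact Real.sqrt_pos.mpr hdetA
  -- quadratic form as a square
  have hquad : ∀ x : Fin m → ℝ, x ⬝ᵥ (A *ᵥ x) = (R *ᵥ x) ⬝ᵥ (R *ᵥ x) := by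
    intro x
    conv_lhs => rw [← hRsq]
    rw [← Matrix.mulVec_mulVec, Matrix.dotProduct_mulVec, ← Matrix.mulVec_transpose, hRsym]
  -- the standard gaussian
  have hgprod : ∀ y : Fin m → ℝ, Real.exp (-(1/2 : ℝ) * (y ⬝ᵥ y))
      = ∏ i, Real.exp (-(1/2 : ℝ) * (y i) ^ 2) := by
    intro y
    rw [← Real.exp_sum]
    refine congrArg Real.exp ?_
    simp only [dotProduct]
    rw [Finset.mul_sum]
    exact Finset.sum_congr rfl fun i _ => by ring
  set g : (Fin m → ℝ) → ℝ := fun y => Real.exp (-(1/2 : ℝ) * (y ⬝ᵥ y)) with hg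
  have hone_int : Integrable (fun t : ℝ => Real.exp (-(1/2 : ℝ) * t ^ 2)) :=
    integrable_exp_neg_mul_sq (by norm_num)
  have hg_int : Integrable g := by
    have h := MeasureTheory.Integrable.fintype_prod (ι := Fin m)
      (f := fun _ : Fin m => fun t : ℝ => Real.exp (-(1/2 : ℝ) * t ^ 2))
      (fun _ => hone_int)
    exact h.congr (Filter.Eventually.of_forall fun y => (hgprod y).symm)
  have hg_cont : Continuous g := by
    apply Real.continuous_exp.comp
    apply continuous_const.mul
    simp only [dotProduct]
    exact continuous_finset_sum _ fun i _ => (continuous_apply i).mul (continuous_apply i)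
  have hg_val : ∫ y : Fin m → ℝ, g y = Real.sqrt (2 * Real.pi) ^ m := by
    calc ∫ y : Fin m → ℝ, g y
        = ∫ y : Fin m → ℝ, ∏ i, Real.exp (-(1/2 : ℝ) * (y i) ^ 2) := by
          exact integral_congr_ae (Filter.Eventually.of_forall fun y => hgprod y)
      _ = (∫ t : ℝ, Real.exp (-(1/2 : ℝ) * t ^ 2)) ^ (Fintype.card (Fin m)) :=
          MeasureTheory.integral_fintype_prod_eq_pow (ι := Fin m)
            (fun t : ℝ => Real.exp (-(1/2 : ℝ) * t ^ 2))
      _ = Real.sqrt (2 * Real.pi) ^ m := by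
          rw [integral_gaussian (1/2 : ℝ), show Real.pi / (1/2 : ℝ) = 2 * Real.pi by ring,
            Fintype.card_fin]
  -- the linear change of variables
  set L : (Fin m → ℝ) →ₗ[ℝ] (Fin m → ℝ) := Matrix.toLin' R with hL
  have hLdet : LinearMap.det L = R.det := LinearMap.det_toLin' R
  have hLapp : ∀ x, L x = R *ᵥ x := fun x => Matrix.toLin'_apply R x
  have hLcont : Continuous fun x : Fin m → ℝ => L x := L.continuous_of_finiteDimensional
  have hmap : Measure.map (⇑L) volume
      = ENNReal.ofReal |(R.det)⁻¹| • (volume : Measure (Fin m → ℝ)) := by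
    rw [← hLdet]
    exact Measure.map_linearMap_addHaar_pi_eq_smul_addHaar (by rw [hLdet]; exact hRdet_pos.ne') volume
  have hgm : AEStronglyMeasurable g (Measure.map (⇑L) volume) :=
    hg_cont.aestronglyMeasurable
  have hcomp_eq : (fun x : Fin m → ℝ => Real.exp (-(1/2 : ℝ) * (x ⬝ᵥ (A *ᵥ x))))
      = fun x => g (L x) := by
    funext x
    rw [hg, hLapp, hquad]
  have hgmap_int : Integrable g (Measure.map (⇑L) volume) := by
    rw [hmap]
    exact hg_int.smul_measure ENNReal.ofReal_ne_top
  have hint : Integrable (fun x : Fin m → ℝ => Real.exp (-(1/2 : ℝ) * (x ⬝ᵥ (A *ᵥ x)))) := by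
    rw [hcomp_eq]
    exact (integrable_map_measure hgm hLcont.measurable.aemeasurable).mp hgmap_int
  refine ⟨hint, ?_⟩
  rw [hcomp_eq]
  have h1 : ∫ x, g (L x) = ∫ y, g y ∂(Measure.map (⇑L) volume) :=
    (integral_map hLcont.measurable.aemeasurable hgm).symm
  rw [h1, hmap, integral_smul_measure, hg_val, ENNReal.toReal_ofReal (abs_nonneg _),
    abs_of_nonneg (inv_nonneg.mpr hRdet_nonneg), hRdet_eq]
  rw [smul_eq_mul, mul_comm]

private lemma gaussDensity_eq (φ : Fin m → ℝ) {S : Matrix (Fin m) (Fin m) ℝ}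
    (hS : S.PosDef) :
    gaussDensity φ S = fun x =>
      (2 * Real.pi) ^ (-(m : ℝ) / 2) * (Real.sqrt S.det)⁻¹ *
        Real.exp (-(1/2 : ℝ) * ((x - φ) ⬝ᵥ (S⁻¹ *ᵥ (x - φ)))) := by
  funext x
  unfold gaussDensity
  congr 2
  rw [show (-(1 : ℝ)/2) = -(1/2 : ℝ) by norm_num, Real.rpow_neg hS.det_pos.le,
    ← Real.sqrt_eq_rpow]

private lemma two_pi_pow : ((2 * Real.pi) ^ (-(m : ℝ) / 2)) * Real.sqrt (2 * Real.pi) ^ m = 1 := by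
  have h2π : (0 : ℝ) < 2 * Real.pi := by positivity
  have h : Real.sqrt (2 * Real.pi) ^ m = (2 * Real.pi) ^ ((m : ℝ) / 2) := by
    rw [Real.sqrt_eq_rpow, ← Real.rpow_natCast ((2 * Real.pi) ^ ((1:ℝ)/2)) m,
      ← Real.rpow_mul h2π.le]
    congr 1
    ring
  rw [h, ← Real.rpow_add h2π, neg_div, neg_add_cancel, Real.rpow_zero]

private lemma gaussDensity_int (φ : Fin m → ℝ) {S : Matrix (Fin m) (Fin m) ℝ}
    (hS : S.PosDef) :
    Integrable (gaussDensity φ S) ∧ ∫ x : Fin m → ℝ, gaussDensity φ S x = 1 := by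
  obtain ⟨hint, hval⟩ := gauss_aux hS.inv
  have hdet : (S⁻¹).det = S.det⁻¹ := by
    rw [Matrix.det_nonsing_inv, Ring.inverse_eq_inv']
  have hsqrt : (Real.sqrt (S⁻¹).det)⁻¹ = Real.sqrt S.det := by
    rw [hdet, Real.sqrt_inv, inv_inv]
  have hshift_int : Integrable
      (fun x : Fin m → ℝ => Real.exp (-(1/2 : ℝ) * ((x - φ) ⬝ᵥ (S⁻¹ *ᵥ (x - φ))))) :=
    hint.comp_sub_right φ
  have hshift_val : ∫ x : Fin m → ℝ, Real.exp (-(1/2 : ℝ) * ((x - φ) ⬝ᵥ (S⁻¹ *ᵥ (x - φ))))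
      = Real.sqrt (2 * Real.pi) ^ m * Real.sqrt S.det := by
    rw [integral_sub_right_eq_self
      (fun v : Fin m → ℝ => Real.exp (-(1/2 : ℝ) * (v ⬝ᵥ (S⁻¹ *ᵥ v)))) φ, hval, hsqrt]
  constructor
  · rw [gaussDensity_eq φ hS]
    exact hshift_int.const_mul _
  · rw [gaussDensity_eq φ hS, integral_const_mul, hshift_val]
    have hd : 0 < Real.sqrt S.det := Real.sqrt_pos.mpr hS.det_pos
    have h := two_pi_pow (m := m)
    have hd' : (Real.sqrt S.det)⁻¹ * Real.sqrt S.det = 1 := inv_mul_cancel₀ hd.ne'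
    linear_combination ((Real.sqrt S.det)⁻¹ * Real.sqrt S.det) * h + hd'
private lemma abs_bound {a b e₁ e₂ : ℝ} (hb : 0 ≤ b) (hba : b ≤ a) (he₁ : 0 ≤ e₁)
    (he : e₁ ≤ e₂) :
    |a * e₁ - b * e₂| ≤ a * e₁ + b * e₂ - 2 * (b * e₁) := by
  rw [abs_le]
  constructor <;> nlinarith

end Aux

/-- For PD covariances with `S₁⁻¹ − S₂⁻¹` PSD, the `L¹` distance between Gaussians
with a common mean is at most `2(√det S₂ − √det S₁)/√det S₁`. -/
theorem gaussian_covariance_L1_bound {m : ℕ}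
    (φ : Fin m → ℝ) (S₁ S₂ : Matrix (Fin m) (Fin m) ℝ)
    (hS₁ : S₁.PosDef) (hS₂ : S₂.PosDef)
    (hPSD : (S₁⁻¹ - S₂⁻¹).PosSemidef) :
    ∫ x : Fin m → ℝ, |gaussDensity φ S₁ x - gaussDensity φ S₂ x|
      ≤ 2 * (Real.sqrt S₂.det - Real.sqrt S₁.det) / Real.sqrt S₁.det := by
  obtain ⟨hp₁, hi₁⟩ := gaussDensity_int φ hS₁
  obtain ⟨hp₂, hi₂⟩ := gaussDensity_int φ hS₂
  have hd₁ : 0 < Real.sqrt S₁.det := Real.sqrt_pos.mpr hS₁.det_pos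
  have hd₂ : 0 < Real.sqrt S₂.det := Real.sqrt_pos.mpr hS₂.det_pos
  have hK : (0 : ℝ) < (2 * Real.pi) ^ (-(m : ℝ) / 2) :=
    Real.rpow_pos_of_pos (by positivity) _
  -- pointwise comparison of the exponential factors
  have hE : ∀ v : Fin m → ℝ, Real.exp (-(1/2 : ℝ) * (v ⬝ᵥ (S₁⁻¹ *ᵥ v)))
      ≤ Real.exp (-(1/2 : ℝ) * (v ⬝ᵥ (S₂⁻¹ *ᵥ v))) := by
    intro v
    apply Real.exp_le_exp.mpr
    have h := hPSD.dotProduct_mulVec_nonneg v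
    rw [star_trivial, Matrix.sub_mulVec, dotProduct_sub] at h
    nlinarith
  -- determinant comparison
  have hdet_le : Real.sqrt S₁.det ≤ Real.sqrt S₂.det := by
    obtain ⟨hA₁int, hA₁val⟩ := gauss_aux hS₁.inv
    obtain ⟨hA₂int, hA₂val⟩ := gauss_aux hS₂.inv
    have hmono := integral_mono hA₁int hA₂int (fun v => hE v)
    rw [hA₁val, hA₂val] at hmono
    have e₁ : (Real.sqrt (S₁⁻¹).det)⁻¹ = Real.sqrt S₁.det := by
      rw [Matrix.det_nonsing_inv, Ring.inverse_eq_inv', Real.sqrt_inv, inv_inv]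
    have e₂ : (Real.sqrt (S₂⁻¹).det)⁻¹ = Real.sqrt S₂.det := by
      rw [Matrix.det_nonsing_inv, Ring.inverse_eq_inv', Real.sqrt_inv, inv_inv]
    rw [e₁, e₂] at hmono
    have hP : (0 : ℝ) < Real.sqrt (2 * Real.pi) ^ m :=
      pow_pos (Real.sqrt_pos.mpr (by positivity)) m
    exact le_of_mul_le_mul_left hmono hP
  -- pointwise bound
  have hpt : ∀ x : Fin m → ℝ, |gaussDensity φ S₁ x - gaussDensity φ S₂ x|
      ≤ gaussDensity φ S₁ x + gaussDensity φ S₂ x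
        - 2 * (Real.sqrt S₁.det / Real.sqrt S₂.det) * gaussDensity φ S₁ x := by
    intro x
    have e1 : gaussDensity φ S₁ x
        = (2 * Real.pi) ^ (-(m : ℝ) / 2) * (Real.sqrt S₁.det)⁻¹ *
          Real.exp (-(1/2 : ℝ) * ((x - φ) ⬝ᵥ (S₁⁻¹ *ᵥ (x - φ)))) :=
      congrFun (gaussDensity_eq φ hS₁) x
    have e2 : gaussDensity φ S₂ x
        = (2 * Real.pi) ^ (-(m : ℝ) / 2) * (Real.sqrt S₂.det)⁻¹ *
          Real.exp (-(1/2 : ℝ) * ((x - φ) ⬝ᵥ (S₂⁻¹ *ᵥ (x - φ)))) :=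
      congrFun (gaussDensity_eq φ hS₂) x
    rw [e1, e2]
    have h2 : 2 * (Real.sqrt S₁.det / Real.sqrt S₂.det) *
        ((2 * Real.pi) ^ (-(m : ℝ) / 2) * (Real.sqrt S₁.det)⁻¹ *
          Real.exp (-(1/2 : ℝ) * ((x - φ) ⬝ᵥ (S₁⁻¹ *ᵥ (x - φ)))))
        = 2 * ((2 * Real.pi) ^ (-(m : ℝ) / 2) * (Real.sqrt S₂.det)⁻¹ *
          Real.exp (-(1/2 : ℝ) * ((x - φ) ⬝ᵥ (S₁⁻¹ *ᵥ (x - φ))))) := by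
      field_simp
    rw [h2]
    exact abs_bound (by positivity)
      (mul_le_mul_of_nonneg_left (inv_anti₀ hd₁ hdet_le) hK.le)
      (Real.exp_nonneg _) (hE (x - φ))
  -- integrate
  have hint_rhs : Integrable (fun x : Fin m → ℝ =>
      gaussDensity φ S₁ x + gaussDensity φ S₂ x
        - 2 * (Real.sqrt S₁.det / Real.sqrt S₂.det) * gaussDensity φ S₁ x) :=
    (hp₁.add hp₂).sub (hp₁.const_mul _)
  calc ∫ x : Fin m → ℝ, |gaussDensity φ S₁ x - gaussDensity φ S₂ x|
      ≤ ∫ x : Fin m → ℝ, (gaussDensity φ S₁ x + gaussDensity φ S₂ x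
          - 2 * (Real.sqrt S₁.det / Real.sqrt S₂.det) * gaussDensity φ S₁ x) :=
        integral_mono (hp₁.sub hp₂).abs hint_rhs hpt
    _ = 1 + 1 - 2 * (Real.sqrt S₁.det / Real.sqrt S₂.det) * 1 := by
        have ha : Integrable (fun x : Fin m → ℝ =>
            gaussDensity φ S₁ x + gaussDensity φ S₂ x) := hp₁.add hp₂
        have hb : Integrable (fun x : Fin m → ℝ =>
            2 * (Real.sqrt S₁.det / Real.sqrt S₂.det) * gaussDensity φ S₁ x) :=
          hp₁.const_mul _
        rw [integral_sub ha hb, integral_add hp₁ hp₂, integral_const_mul, hi₁, hi₂]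
    _ = 2 * (Real.sqrt S₂.det - Real.sqrt S₁.det) / Real.sqrt S₂.det := by
        field_simp
        ring
    _ ≤ 2 * (Real.sqrt S₂.det - Real.sqrt S₁.det) / Real.sqrt S₁.det := by
        apply div_le_div_of_nonneg_left (by linarith) hd₁ hdet_le
end
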